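/- With Y_i^{(+)} = P(A_1^{(+)}(i) ∩ Ā_2 ∩ ⋯ ∩ Ā_m) and Y_i^{(−)} = P(A_1^{(−)}(i) ∩ Ā_2 ∩ ⋯ ∩ Ā_m), one has ∑_{i=1}^m Y_i^{(+)} + ∑_{i=1}^m Y_i^{(−)} = p^{m−1} { (q_1² + q_2²) [ (m−1) + p/(p−1) ] + q_1 q_2/(p−1) − (q_1² + q_2²) p^{m−1}/(p−1) + q_1 q_2 [ (m−2) p^{m−2} − p^{m−2}/(p−1) ] }. -/

import Mathlib

open MeasureTheory ProbabilityTheory Finset Filter Asymptotics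

/-- `contaminatedEvent X m n` is the event that the block `X n, X (n+1), ..., X (n+m-1)` is
at most `1+1` contaminated: it contains at most one value `+1` and at most one value `-1`
(all remaining entries being `0`, given that the values lie in `{0, +1, -1}`). -/
def contaminatedEvent {Ω : Type*} (X : ℕ → Ω → ℤ) (m n : ℕ) : Set Ω :=
  {ω | ((Finset.Icc n (n + m - 1)).filter (fun i => X i ω = 1)).card ≤ 1 ∧
       ((Finset.Icc n (n + m - 1)).filter (fun i => X i ω = -1)).card ≤ 1}

/-- The event that `X 1, ..., X m` are all `0` (a pure run). -/
def pureEvent {Ω : Type*} (X : ℕ → Ω → ℤ) (m : ℕ) : Set Ω :=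
  {ω | ∀ i ∈ Finset.Icc 1 m, X i ω = 0}

/-- The event that `X i = +1` and all the other entries among `X 1, ..., X m` are `0`. -/
def plusEvent {Ω : Type*} (X : ℕ → Ω → ℤ) (m i : ℕ) : Set Ω :=
  {ω | X i ω = 1 ∧ ∀ j ∈ Finset.Icc 1 m, j ≠ i → X j ω = 0}

/-- The event that `X i = -1` and all the other entries among `X 1, ..., X m` are `0`. -/
def minusEvent {Ω : Type*} (X : ℕ → Ω → ℤ) (m i : ℕ) : Set Ω :=
  {ω | X i ω = -1 ∧ ∀ j ∈ Finset.Icc 1 m, j ≠ i → X j ω = 0}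

/-- The event that `X i = +1`, `X j = -1` and all the other entries among
`X 1, ..., X m` are `0`. -/
def twoEvent {Ω : Type*} (X : ℕ → Ω → ℤ) (m i j : ℕ) : Set Ω :=
  {ω | X i ω = 1 ∧ X j ω = -1 ∧ ∀ l ∈ Finset.Icc 1 m, l ≠ i → l ≠ j → X l ω = 0}


private lemma card_filter_le_one {s : Finset ℕ} {p : ℕ → Prop} [DecidablePred p] {t : ℕ}
    (h : ∀ j ∈ s, p j → j = t) : (s.filter p).card ≤ 1 := by
  apply Finset.card_le_one.mpr
  intro x hx y hy
  simp only [Finset.mem_filter] at hx hy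
  rw [h x hx.1 hx.2, h y hy.1 hy.2]

private lemma mem_cont_of {Ω : Type*} (X : ℕ → Ω → ℤ) {m n : ℕ} {ω : Ω} {t1 t2 : ℕ}
    (h1 : ∀ j ∈ Finset.Icc n (n + m - 1), X j ω = 1 → j = t1)
    (h2 : ∀ j ∈ Finset.Icc n (n + m - 1), X j ω = -1 → j = t2) :
    ω ∈ contaminatedEvent X m n :=
  ⟨card_filter_le_one h1, card_filter_le_one h2⟩

private lemma not_cont_of {Ω : Type*} (X : ℕ → Ω → ℤ) {m n : ℕ} {ω : Ω} {w : ℤ}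
    (hw : w = 1 ∨ w = -1) {j k : ℕ}
    (hj : j ∈ Finset.Icc n (n + m - 1)) (hk : k ∈ Finset.Icc n (n + m - 1)) (hjk : j ≠ k)
    (hXj : X j ω = w) (hXk : X k ω = w) : ω ∉ contaminatedEvent X m n := by
  intro hcon
  obtain ⟨h1, h2⟩ := hcon
  rcases hw with rfl | rfl
  · have : 1 < ((Finset.Icc n (n + m - 1)).filter (fun i => X i ω = 1)).card :=
      Finset.one_lt_card.mpr
        ⟨j, Finset.mem_filter.mpr ⟨hj, hXj⟩, k, Finset.mem_filter.mpr ⟨hk, hXk⟩, hjk⟩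
    omega
  · have : 1 < ((Finset.Icc n (n + m - 1)).filter (fun i => X i ω = -1)).card :=
      Finset.one_lt_card.mpr
        ⟨j, Finset.mem_filter.mpr ⟨hj, hXj⟩, k, Finset.mem_filter.mpr ⟨hk, hXk⟩, hjk⟩
    omega

/-- Step from `Ā₂`: the only nonzero among `X₂,…,X_{m+1}` besides possibly `i` is `m+1`,
so non-contamination of window 2 forces `2 ≤ i` and `X (m+1) ω = v`. -/
private lemma step2 {Ω : Type*} {X : ℕ → Ω → ℤ} {v : ℤ} (hv : v = 1 ∨ v = -1)
    {m i : ℕ} {ω : Ω} (hm : 3 ≤ m) (him : 1 ≤ i ∧ i ≤ m)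
    (hXi : X i ω = v) (hz : ∀ j ∈ Finset.Icc 1 m, j ≠ i → X j ω = 0)
    (hnc : ω ∉ contaminatedEvent X m 2) : 2 ≤ i ∧ X (m + 1) ω = v := by
  have hw : 2 + m - 1 = m + 1 := by omega
  have hval0 : ∀ j ∈ Finset.Icc 2 (m + 1), X j ω ≠ 0 → j = i ∨ j = m + 1 := by
    intro j hj hne
    rw [Finset.mem_Icc] at hj
    by_contra hcon
    push_neg at hcon
    exact hne (hz j (Finset.mem_Icc.mpr ⟨by omega, by omega⟩) hcon.1)
  have main : ∀ w : ℤ, w = 1 ∨ w = -1 → X i ω = w →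
      (¬ ((Finset.Icc 2 (m+1)).filter (fun j => X j ω = w)).card ≤ 1) → 2 ≤ i ∧ X (m+1) ω = w := by
    intro w hw0 hXiw hbig
    have hsub : (Finset.Icc 2 (m + 1)).filter (fun j => X j ω = w) ⊆ {i, m + 1} := by
      intro j hj
      rw [Finset.mem_filter] at hj
      have : j = i ∨ j = m + 1 := by
        apply hval0 j hj.1
        rw [hj.2]
        rcases hw0 with rfl | rfl <;> decide
      simpa [Finset.mem_insert, Finset.mem_singleton] using this
    have hc2 : ({i, m + 1} : Finset ℕ).card ≤
        ((Finset.Icc 2 (m + 1)).filter (fun j => X j ω = w)).card := by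
      have := Finset.card_insert_le i ({m + 1} : Finset ℕ)
      simp only [Finset.card_singleton] at this
      omega
    have heq := Finset.eq_of_subset_of_card_le hsub hc2
    have hi_mem : i ∈ (Finset.Icc 2 (m + 1)).filter (fun j => X j ω = w) := by
      rw [heq]; simp
    have hm1_mem : m + 1 ∈ (Finset.Icc 2 (m + 1)).filter (fun j => X j ω = w) := by
      rw [heq]; simp
    rw [Finset.mem_filter, Finset.mem_Icc] at hi_mem hm1_mem
    exact ⟨hi_mem.1.1, hm1_mem.2⟩
  rcases hv with rfl | rfl
  · have hmin : ((Finset.Icc 2 (2 + m - 1)).filter (fun j => X j ω = -1)).card ≤ 1 := by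
      rw [hw]
      apply card_filter_le_one (t := m + 1)
      intro j hj hXj
      rcases hval0 j hj (by rw [hXj]; decide) with h | h
      · exfalso; rw [h, hXi] at hXj; exact absurd hXj (by decide)
      · exact h
    have hbig : ¬ ((Finset.Icc 2 (m + 1)).filter (fun j => X j ω = 1)).card ≤ 1 := by
      intro hle
      rw [← hw] at hle
      exact hnc ⟨hle, hmin⟩
    exact main 1 (Or.inl rfl) hXi hbig
  · have hplu : ((Finset.Icc 2 (2 + m - 1)).filter (fun j => X j ω = 1)).card ≤ 1 := by
      rw [hw]
      apply card_filter_le_one (t := m + 1)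
      intro j hj hXj
      rcases hval0 j hj (by rw [hXj]; decide) with h | h
      · exfalso; rw [h, hXi] at hXj; exact absurd hXj (by decide)
      · exact h
    have hbig : ¬ ((Finset.Icc 2 (m + 1)).filter (fun j => X j ω = -1)).card ≤ 1 := by
      intro hle
      rw [← hw] at hle
      exact hnc ⟨hplu, hle⟩
    exact main (-1) (Or.inr rfl) hXi hbig

/-- all windows `2 ≤ n ≤ m` are uncontaminated given the structure. -/
private lemma windows_ok {Ω : Type*} {X : ℕ → Ω → ℤ} {v : ℤ} (hv : v = 1 ∨ v = -1)
    {m i : ℕ} {ω : Ω} (hm : 3 ≤ m) (hi2 : 2 ≤ i) (him : i ≤ m)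
    (hXi : X i ω = v) (hXm1 : X (m + 1) ω = v)
    (htail : i = m ∨ ((∃ j ∈ Finset.Icc (m + 2) (m + i), X j ω = v) ∨
      (∃ j ∈ Finset.Icc (m + 2) (m + i), ∃ k ∈ Finset.Icc (m + 2) (m + i),
        j ≠ k ∧ X j ω = -v ∧ X k ω = -v))) :
    ∀ n ∈ Finset.Icc 2 m, ω ∉ contaminatedEvent X m n := by
  intro n hn
  rw [Finset.mem_Icc] at hn
  by_cases hni : n ≤ i
  · exact not_cont_of X hv (j := i) (k := m + 1)
      (Finset.mem_Icc.mpr ⟨by omega, by omega⟩)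
      (Finset.mem_Icc.mpr ⟨by omega, by omega⟩) (by omega) hXi hXm1
  · push_neg at hni
    have htail' : (∃ j ∈ Finset.Icc (m + 2) (m + i), X j ω = v) ∨
        (∃ j ∈ Finset.Icc (m + 2) (m + i), ∃ k ∈ Finset.Icc (m + 2) (m + i),
          j ≠ k ∧ X j ω = -v ∧ X k ω = -v) := by
      rcases htail with rfl | h
      · omega
      · exact h
    rcases htail' with ⟨j, hj, hXj⟩ | ⟨j, hj, k, hk, hjk, hXj, hXk⟩
    · rw [Finset.mem_Icc] at hj
      exact not_cont_of X hv (j := j) (k := m + 1)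
        (Finset.mem_Icc.mpr ⟨by omega, by omega⟩)
        (Finset.mem_Icc.mpr ⟨by omega, by omega⟩) (by omega) hXj hXm1
    · have hv' : -v = 1 ∨ -v = -1 := by
        rcases hv with rfl | rfl
        · right; rfl
        · left; rfl
      rw [Finset.mem_Icc] at hj hk
      exact not_cont_of X hv' (j := j) (k := k)
        (Finset.mem_Icc.mpr ⟨by omega, by omega⟩)
        (Finset.mem_Icc.mpr ⟨by omega, by omega⟩) hjk hXj hXk
private lemma card_filter_le_one' {s : Finset ℕ} {p : ℕ → Prop} [DecidablePred p] {t : ℕ}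
    (h : ∀ j ∈ s, p j → j = t) : (s.filter p).card ≤ 1 := by
  apply Finset.card_le_one.mpr
  intro x hx y hy
  simp only [Finset.mem_filter] at hx hy
  rw [h x hx.1 hx.2, h y hy.1 hy.2]

/-- From non-contamination of window `i+1` extract a tail condition. -/
private lemma step_tail {Ω : Type*} {X : ℕ → Ω → ℤ} {v : ℤ} (hv : v = 1 ∨ v = -1)
    {m i : ℕ} {ω : Ω} (hm : 3 ≤ m) (hi2 : 2 ≤ i) (him : i + 1 ≤ m)
    (hz : ∀ j ∈ Finset.Icc 1 m, j ≠ i → X j ω = 0) (hXm1 : X (m + 1) ω = v)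
    (hval : ∀ j, X j ω = 0 ∨ X j ω = v ∨ X j ω = -v)
    (hnc : ω ∉ contaminatedEvent X m (i + 1)) :
    (∃ j ∈ Finset.Icc (m + 2) (m + i), X j ω = v) ∨
      (∃ j ∈ Finset.Icc (m + 2) (m + i), ∃ k ∈ Finset.Icc (m + 2) (m + i),
        j ≠ k ∧ X j ω = -v ∧ X k ω = -v) := by
  by_contra hcon
  push_neg at hcon
  obtain ⟨hnp, hnm⟩ := hcon
  apply hnc
  -- window is Icc (i+1) (i+1+m-1); note i+1+m-1 = m+i
  have hwin : ∀ j ∈ Finset.Icc (i + 1) (i + 1 + m - 1),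
      (j ≤ m ∧ X j ω = 0) ∨ j = m + 1 ∨ (m + 2 ≤ j ∧ j ≤ m + i) := by
    intro j hj
    rw [Finset.mem_Icc] at hj
    rcases Nat.lt_or_ge j (m + 1) with h | h
    · exact Or.inl ⟨by omega, hz j (Finset.mem_Icc.mpr ⟨by omega, by omega⟩) (by omega)⟩
    · rcases Nat.eq_or_lt_of_le h with h' | h'
      · exact Or.inr (Or.inl h'.symm)
      · exact Or.inr (Or.inr ⟨by omega, by omega⟩)
  have honeV : ∀ j ∈ Finset.Icc (i + 1) (i + 1 + m - 1), X j ω = v → j = m + 1 := by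
    intro j hj hXj
    rcases hwin j hj with ⟨_, h0⟩ | h | ⟨h1, h2⟩
    · exfalso; rw [h0] at hXj; rcases hv with rfl | rfl <;> exact absurd hXj.symm (by decide)
    · exact h
    · exact absurd hXj (hnp j (Finset.mem_Icc.mpr ⟨h1, h2⟩))
  have hcardMV : ((Finset.Icc (i+1) (i+1+m-1)).filter (fun j => X j ω = -v)).card ≤ 1 := by
    apply Finset.card_le_one.mpr
    intro x hx y hy
    rw [Finset.mem_filter] at hx hy
    have hxT : m + 2 ≤ x ∧ x ≤ m + i := by
      rcases hwin x hx.1 with ⟨_, h0⟩ | h | h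
      · exfalso; rw [h0] at hx; rcases hv with rfl | rfl <;> exact absurd hx.2.symm (by decide)
      · exfalso; rw [h] at hx; rw [hXm1] at hx
        rcases hv with rfl | rfl <;> exact absurd hx.2 (by decide)
      · exact h
    have hyT : m + 2 ≤ y ∧ y ≤ m + i := by
      rcases hwin y hy.1 with ⟨_, h0⟩ | h | h
      · exfalso; rw [h0] at hy; rcases hv with rfl | rfl <;> exact absurd hy.2.symm (by decide)
      · exfalso; rw [h] at hy; rw [hXm1] at hy
        rcases hv with rfl | rfl <;> exact absurd hy.2 (by decide)
      · exact h
    by_contra hxy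
    exact (hnm x (Finset.mem_Icc.mpr hxT) y (Finset.mem_Icc.mpr hyT) hxy hx.2) hy.2
  rcases hv with rfl | rfl
  · refine ⟨card_filter_le_one' (t := m+1) ?_, hcardMV⟩
    exact honeV
  · refine ⟨hcardMV, card_filter_le_one' (t := m+1) ?_⟩
    exact honeV
open Classical in
noncomputable def patB (v : ℤ) (i m : ℕ) : ℕ → ℤ := fun j => if j = i ∨ j = m + 1 then v else 0

open Classical in
noncomputable def patK (v : ℤ) (i m k : ℕ) : ℕ → ℤ := fun j => if j = k then -v else patB v i m j

private lemma patB_i (v : ℤ) (i m : ℕ) : patB v i m i = v := by simp [patB]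
private lemma patB_m1 (v : ℤ) (i m : ℕ) : patB v i m (m + 1) = v := by simp [patB]
private lemma patB_other (v : ℤ) {i m j : ℕ} (h1 : j ≠ i) (h2 : j ≠ m + 1) :
    patB v i m j = 0 := by simp [patB, h1, h2]
private lemma patK_self (v : ℤ) (i m k : ℕ) : patK v i m k k = -v := by simp [patK]
private lemma patK_other (v : ℤ) {i m k j : ℕ} (h : j ≠ k) :
    patK v i m k j = patB v i m j := by simp [patK, h]

private lemma prod_const_off (s t : Finset ℕ) (hts : t ⊆ s) (f : ℕ → ℝ) (c : ℝ)
    (hf : ∀ x ∈ s, x ∉ t → f x = c) :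
    ∏ x ∈ s, f x = (∏ x ∈ t, f x) * c ^ (s.card - t.card) := by
  rw [← Finset.prod_sdiff hts, Finset.prod_congr rfl
    (fun x hx => hf x (Finset.mem_sdiff.mp hx).1 (Finset.mem_sdiff.mp hx).2),
    Finset.prod_const, Finset.card_sdiff_of_subset hts, mul_comm]

private lemma cylEq_prob {Ω : Type*} [MeasurableSpace Ω] (P : Measure Ω)
    (X : ℕ → Ω → ℤ)
    (hindep : iIndepFun X P)
    (s : Finset ℕ) (a : ℕ → ℤ) :
    P (⋂ j ∈ s, {ω | X j ω = a j}) = ∏ j ∈ s, P {ω | X j ω = a j} := by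
  have h := hindep.measure_inter_preimage_eq_mul (S := s) (sets := fun j => {a j})
    (fun i _ => measurableSet_singleton _)
  simpa [Set.preimage, Set.mem_singleton_iff] using h

private lemma cylEq_toReal {Ω : Type*} [MeasurableSpace Ω] (P : Measure Ω)
    (X : ℕ → Ω → ℤ)
    (hindep : iIndepFun X P)
    (s : Finset ℕ) (a : ℕ → ℤ) :
    (P (⋂ j ∈ s, {ω | X j ω = a j})).toReal = ∏ j ∈ s, (P {ω | X j ω = a j}).toReal := by
  rw [cylEq_prob P X hindep, ENNReal.toReal_prod]

private lemma cylEq_meas {Ω : Type*} [MeasurableSpace Ω]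
    (X : ℕ → Ω → ℤ) (hmeas : ∀ i, Measurable (X i)) (s : Finset ℕ) (a : ℕ → ℤ) :
    MeasurableSet (⋂ j ∈ s, {ω | X j ω = a j}) :=
  MeasurableSet.biInter s.countable_toSet
    (fun j _ => (hmeas j) (measurableSet_singleton (a j)))

private lemma prob_patB {Ω : Type*} [MeasurableSpace Ω] (P : Measure Ω)
    (X : ℕ → Ω → ℤ) (hindep : iIndepFun X P)
    (p a : ℝ) (hp : 0 ≤ p) (ha : 0 ≤ a) (v : ℤ)
    (h0 : ∀ j, P {ω | X j ω = 0} = ENNReal.ofReal p)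
    (hA : ∀ j, P {ω | X j ω = v} = ENNReal.ofReal a)
    (i m M : ℕ) (hi1 : 1 ≤ i) (him : i ≤ m) (hM : m + 1 ≤ M) :
    (P (⋂ j ∈ Finset.Icc 1 M, {ω | X j ω = patB v i m j})).toReal = a ^ 2 * p ^ (M - 2) := by
  rw [cylEq_toReal P X hindep]
  rw [prod_const_off (Finset.Icc 1 M) {i, m + 1}
    (by
      intro x hx
      simp only [Finset.mem_insert, Finset.mem_singleton] at hx
      rw [Finset.mem_Icc]
      omega)
    _ p
    (by
      intro x hx hnot
      simp only [Finset.mem_insert, Finset.mem_singleton] at hnot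
      push_neg at hnot
      rw [patB_other v hnot.1 hnot.2, h0 x, ENNReal.toReal_ofReal hp])]
  rw [Finset.prod_pair (by omega : i ≠ m + 1)]
  rw [patB_i, patB_m1, hA i, hA (m + 1), ENNReal.toReal_ofReal ha]
  rw [Nat.card_Icc, Finset.card_pair (by omega : i ≠ m + 1)]
  rw [show M + 1 - 1 = M by omega]
  ring

private lemma prob_patK {Ω : Type*} [MeasurableSpace Ω] (P : Measure Ω)
    (X : ℕ → Ω → ℤ) (hindep : iIndepFun X P)
    (p a b : ℝ) (hp : 0 ≤ p) (ha : 0 ≤ a) (hb : 0 ≤ b) (v : ℤ)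
    (h0 : ∀ j, P {ω | X j ω = 0} = ENNReal.ofReal p)
    (hA : ∀ j, P {ω | X j ω = v} = ENNReal.ofReal a)
    (hB : ∀ j, P {ω | X j ω = -v} = ENNReal.ofReal b)
    (i m M k : ℕ) (hi1 : 1 ≤ i) (him : i ≤ m) (hk1 : m + 2 ≤ k) (hk2 : k ≤ M) :
    (P (⋂ j ∈ Finset.Icc 1 M, {ω | X j ω = patK v i m k j})).toReal =
      a ^ 2 * b * p ^ (M - 3) := by
  rw [cylEq_toReal P X hindep]
  rw [prod_const_off (Finset.Icc 1 M) {i, m + 1, k}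
    (by
      intro x hx
      simp only [Finset.mem_insert, Finset.mem_singleton] at hx
      rw [Finset.mem_Icc]
      omega)
    _ p
    (by
      intro x hx hnot
      simp only [Finset.mem_insert, Finset.mem_singleton] at hnot
      push_neg at hnot
      rw [patK_other v hnot.2.2, patB_other v hnot.1 hnot.2.1, h0 x,
        ENNReal.toReal_ofReal hp])]
  rw [Finset.prod_insert (by simp only [Finset.mem_insert, Finset.mem_singleton]; omega),
    Finset.prod_insert (by simp only [Finset.mem_singleton]; omega),
    Finset.prod_singleton]
  rw [patK_other v (by omega : i ≠ k), patB_i, patK_other v (by omega : m + 1 ≠ k), patB_m1,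
    patK_self, hA i, hA (m + 1), hB k, ENNReal.toReal_ofReal ha, ENNReal.toReal_ofReal hb]
  rw [Nat.card_Icc]
  rw [Finset.card_insert_of_notMem (by simp only [Finset.mem_insert, Finset.mem_singleton]; omega),
    Finset.card_insert_of_notMem (by simp only [Finset.mem_singleton]; omega),
    Finset.card_singleton]
  rw [show M + 1 - 1 = M by omega]
  ring

private lemma signSumAux {Ω : Type*} [MeasurableSpace Ω] (P : Measure Ω) [IsProbabilityMeasure P]
    (X : ℕ → Ω → ℤ) (hmeas : ∀ i, Measurable (X i))
    (hindep : iIndepFun X P)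
    (p a b : ℝ) (hp : 0 ≤ p) (ha : 0 ≤ a) (hb : 0 ≤ b)
    (v : ℤ) (hv : v = 1 ∨ v = -1)
    (h0 : ∀ j, P {ω | X j ω = 0} = ENNReal.ofReal p)
    (hA : ∀ j, P {ω | X j ω = v} = ENNReal.ofReal a)
    (hB : ∀ j, P {ω | X j ω = -v} = ENNReal.ofReal b)
    (hval : ∀ j ω, X j ω = 0 ∨ X j ω = v ∨ X j ω = -v)
    (m : ℕ) (hm : 3 ≤ m) :
    ∑ i ∈ Finset.Icc 1 m,
      (P ({ω | X i ω = v ∧ ∀ j ∈ Finset.Icc 1 m, j ≠ i → X j ω = 0}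
        ∩ ⋂ n ∈ Finset.Icc 2 m, (contaminatedEvent X m n)ᶜ)).toReal
    = p ^ (m - 1) * a ^ 2 *
        (((m : ℝ) - 1) - ∑ i ∈ Finset.Icc 2 (m - 1),
          (p ^ (i - 1) + ((i : ℝ) - 1) * p ^ (i - 2) * b)) := by
  classical
  set E : ℕ → Set Ω := fun i =>
    {ω | X i ω = v ∧ ∀ j ∈ Finset.Icc 1 m, j ≠ i → X j ω = 0}
      ∩ ⋂ n ∈ Finset.Icc 2 m, (contaminatedEvent X m n)ᶜ with hEdef
  show (∑ i ∈ Finset.Icc 1 m, (P (E i)).toReal) = _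
  have memE : ∀ i ω, ω ∈ E i ↔
      ((X i ω = v ∧ ∀ j ∈ Finset.Icc 1 m, j ≠ i → X j ω = 0) ∧
       ∀ n ∈ Finset.Icc 2 m, ω ∉ contaminatedEvent X m n) := by
    intro i ω
    simp only [hEdef, Set.mem_inter_iff, Set.mem_setOf_eq, Set.mem_iInter, Set.mem_compl_iff]
  have memCyl : ∀ (s : Finset ℕ) (a0 : ℕ → ℤ) (ω : Ω),
      ω ∈ (⋂ j ∈ s, {ω' | X j ω' = a0 j}) ↔ ∀ j ∈ s, X j ω = a0 j := by
    intro s a0 ω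
    simp only [Set.mem_iInter, Set.mem_setOf_eq]
  -- case i = 1
  have hE1 : (P (E 1)).toReal = 0 := by
    have h1 : E 1 = ∅ := by
      rw [Set.eq_empty_iff_forall_notMem]
      intro ω hω
      rw [memE] at hω
      obtain ⟨⟨hXi, hz⟩, hnc⟩ := hω
      have h2 := step2 hv hm ⟨le_refl 1, by omega⟩ hXi hz
        (hnc 2 (Finset.mem_Icc.mpr ⟨le_refl 2, by omega⟩))
      exact absurd h2.1 (by omega)
    rw [h1, measure_empty, ENNReal.toReal_zero]
  -- case i = m
  have hEm : (P (E m)).toReal = a ^ 2 * p ^ (m - 1) := by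
    have hEq : E m = ⋂ j ∈ Finset.Icc 1 (m + 1), {ω | X j ω = patB v m m j} := by
      apply Set.eq_of_subset_of_subset
      · intro ω hω
        rw [memE] at hω
        obtain ⟨⟨hXi, hz⟩, hnc⟩ := hω
        have h2 := step2 hv hm ⟨by omega, le_refl m⟩ hXi hz
          (hnc 2 (Finset.mem_Icc.mpr ⟨le_refl 2, by omega⟩))
        rw [memCyl]
        intro j hj
        rw [Finset.mem_Icc] at hj
        rcases eq_or_ne j m with rfl | hjm
        · rw [patB_i]; exact hXi
        rcases eq_or_ne j (m + 1) with rfl | hjm1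
        · rw [patB_m1]; exact h2.2
        · rw [patB_other v hjm hjm1]
          exact hz j (Finset.mem_Icc.mpr ⟨hj.1, by omega⟩) hjm
      · intro ω hω
        rw [memCyl] at hω
        have hXm : X m ω = v := by
          have := hω m (Finset.mem_Icc.mpr ⟨by omega, by omega⟩)
          rwa [patB_i] at this
        have hXm1 : X (m + 1) ω = v := by
          have := hω (m + 1) (Finset.mem_Icc.mpr ⟨by omega, by omega⟩)
          rwa [patB_m1] at this
        have hz : ∀ j ∈ Finset.Icc 1 m, j ≠ m → X j ω = 0 := by
          intro j hj hne
          rw [Finset.mem_Icc] at hj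
          have := hω j (Finset.mem_Icc.mpr ⟨hj.1, by omega⟩)
          rwa [patB_other v hne (by omega)] at this
        rw [memE]
        exact ⟨⟨hXm, hz⟩, windows_ok hv hm (by omega) le_rfl hXm hXm1 (Or.inl rfl)⟩
    rw [hEq, prob_patB P X hindep p a hp ha v h0 hA m m (m + 1) (by omega) le_rfl le_rfl,
      show m + 1 - 2 = m - 1 by omega]
  -- middle case
  have hmid : ∀ i, 2 ≤ i → i + 1 ≤ m →
      (P (E i)).toReal =
        a ^ 2 * p ^ (m - 1) * (1 - p ^ (i - 1) - ((i : ℝ) - 1) * p ^ (i - 2) * b) := by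
    intro i hi2 him
    have hi_mem : i + 1 ∈ Finset.Icc 2 m := Finset.mem_Icc.mpr ⟨by omega, him⟩
    set B : Set Ω := ⋂ j ∈ Finset.Icc 1 (m + 1), {ω | X j ω = patB v i m j} with hBdef
    set C0 : Set Ω := ⋂ j ∈ Finset.Icc 1 (m + i), {ω | X j ω = patB v i m j} with hC0def
    set CK : ℕ → Set Ω := fun k =>
      ⋂ j ∈ Finset.Icc 1 (m + i), {ω | X j ω = patK v i m k j} with hCKdef
    have hEB : E i ⊆ B := by
      intro ω hω
      rw [memE] at hω
      obtain ⟨⟨hXi, hz⟩, hnc⟩ := hω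
      have h2 := step2 hv hm ⟨by omega, by omega⟩ hXi hz
        (hnc 2 (Finset.mem_Icc.mpr ⟨le_refl 2, by omega⟩))
      rw [hBdef, memCyl]
      intro j hj
      rw [Finset.mem_Icc] at hj
      rcases eq_or_ne j i with rfl | hji
      · rw [patB_i]; exact hXi
      rcases eq_or_ne j (m + 1) with rfl | hjm1
      · rw [patB_m1]; exact h2.2
      · rw [patB_other v hji hjm1]
        exact hz j (Finset.mem_Icc.mpr ⟨hj.1, by omega⟩) hji
    have hdisC0 : ∀ ω ∈ E i, ω ∉ C0 := by
      intro ω hω hC0m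
      rw [memE] at hω
      rw [hC0def, memCyl] at hC0m
      apply hω.2 (i + 1) hi_mem
      have hkey : ∀ (c : ℤ), c = 1 ∨ c = -1 →
          ∀ j ∈ Finset.Icc (i + 1) (i + 1 + m - 1), X j ω = c → j = m + 1 := by
        intro c hc j hj hXj
        rw [Finset.mem_Icc] at hj
        rcases eq_or_ne j (m + 1) with rfl | hjm1
        · rfl
        · exfalso
          have hj0 : X j ω = 0 := by
            have := hC0m j (Finset.mem_Icc.mpr ⟨by omega, by omega⟩)
            rwa [patB_other v (by omega) hjm1] at this
          rw [hj0] at hXj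
          rcases hc with rfl | rfl <;> exact absurd hXj (by decide)
      exact mem_cont_of X (hkey 1 (Or.inl rfl)) (hkey (-1) (Or.inr rfl))
    have hdisCK : ∀ k ∈ Finset.Icc (m + 2) (m + i), ∀ ω ∈ E i, ω ∉ CK k := by
      intro k hk ω hω hCKm
      rw [Finset.mem_Icc] at hk
      rw [memE] at hω
      simp only [hCKdef] at hCKm
      rw [memCyl] at hCKm
      have hXk : X k ω = -v := by
        have := hCKm k (Finset.mem_Icc.mpr ⟨by omega, by omega⟩)
        rwa [patK_self] at this
      have hXm1 : X (m + 1) ω = v := by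
        have := hCKm (m + 1) (Finset.mem_Icc.mpr ⟨by omega, by omega⟩)
        rwa [patK_other v (by omega), patB_m1] at this
      have hboth : ∀ (c : ℤ), ∀ j ∈ Finset.Icc (i + 1) (i + 1 + m - 1),
          X j ω = c → c ≠ 0 → j = m + 1 ∨ j = k := by
        intro c j hj hXj hc
        rw [Finset.mem_Icc] at hj
        by_contra hcon
        push_neg at hcon
        have hj0 : X j ω = 0 := by
          have := hCKm j (Finset.mem_Icc.mpr ⟨by omega, by omega⟩)
          rwa [patK_other v hcon.2, patB_other v (by omega) hcon.1] at this
        rw [hj0] at hXj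
        exact hc hXj.symm
      apply hω.2 (i + 1) hi_mem
      rcases hv with rfl | rfl
      · refine mem_cont_of X (t1 := m + 1) (t2 := k) ?_ ?_
        · intro j hj hXj
          rcases hboth 1 j hj hXj (by decide) with h | h
          · exact h
          · rw [h] at hXj; rw [hXk] at hXj; exact absurd hXj (by decide)
        · intro j hj hXj
          rcases hboth (-1) j hj hXj (by decide) with h | h
          · rw [h] at hXj; rw [hXm1] at hXj; exact absurd hXj (by decide)
          · exact h
      · refine mem_cont_of X (t1 := k) (t2 := m + 1) ?_ ?_
        · intro j hj hXj
          rcases hboth 1 j hj hXj (by decide) with h | h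
          · rw [h] at hXj; rw [hXm1] at hXj; exact absurd hXj (by decide)
          · exact h
        · intro j hj hXj
          rcases hboth (-1) j hj hXj (by decide) with h | h
          · exact h
          · rw [h] at hXj; rw [hXk] at hXj; exact absurd hXj (by decide)
    have hC0B : C0 ⊆ B := by
      intro ω hω
      rw [hC0def, memCyl] at hω
      rw [hBdef, memCyl]
      intro j hj
      rw [Finset.mem_Icc] at hj
      exact hω j (Finset.mem_Icc.mpr ⟨hj.1, by omega⟩)
    have hCKB : ∀ k ∈ Finset.Icc (m + 2) (m + i), CK k ⊆ B := by
      intro k hk ω hω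
      rw [Finset.mem_Icc] at hk
      simp only [hCKdef] at hω
      rw [memCyl] at hω
      rw [hBdef, memCyl]
      intro j hj
      rw [Finset.mem_Icc] at hj
      have := hω j (Finset.mem_Icc.mpr ⟨hj.1, by omega⟩)
      rwa [patK_other v (by omega)] at this
    have hcover : B ⊆ E i ∪ (C0 ∪ ⋃ k ∈ Finset.Icc (m + 2) (m + i), CK k) := by
      intro ω hω
      rw [hBdef, memCyl] at hω
      have hXi : X i ω = v := by
        have := hω i (Finset.mem_Icc.mpr ⟨by omega, by omega⟩)
        rwa [patB_i] at this
      have hXm1 : X (m + 1) ω = v := by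
        have := hω (m + 1) (Finset.mem_Icc.mpr ⟨by omega, by omega⟩)
        rwa [patB_m1] at this
      have hz : ∀ j ∈ Finset.Icc 1 m, j ≠ i → X j ω = 0 := by
        intro j hj hne
        rw [Finset.mem_Icc] at hj
        have := hω j (Finset.mem_Icc.mpr ⟨hj.1, by omega⟩)
        rwa [patB_other v hne (by omega)] at this
      by_cases hT1 : (∃ j ∈ Finset.Icc (m + 2) (m + i), X j ω = v) ∨
          (∃ j ∈ Finset.Icc (m + 2) (m + i), ∃ k ∈ Finset.Icc (m + 2) (m + i),
            j ≠ k ∧ X j ω = -v ∧ X k ω = -v)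
      · apply Set.mem_union_left
        rw [memE]
        exact ⟨⟨hXi, hz⟩, windows_ok hv hm hi2 (by omega) hXi hXm1 (Or.inr hT1)⟩
      · push_neg at hT1
        obtain ⟨hnp, hnm⟩ := hT1
        apply Set.mem_union_right
        by_cases hex : ∃ k ∈ Finset.Icc (m + 2) (m + i), X k ω = -v
        · obtain ⟨k, hk, hXk⟩ := hex
          refine Set.mem_union_right _ (Set.mem_biUnion hk ?_)
          simp only [hCKdef]
          rw [memCyl]
          intro j hj
          rw [Finset.mem_Icc] at hj
          rcases eq_or_ne j k with rfl | hjk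
          · rw [patK_self]; exact hXk
          · rw [patK_other v hjk]
            rcases Nat.lt_or_ge j (m + 2) with hjs | hjs
            · exact hω j (Finset.mem_Icc.mpr ⟨hj.1, by omega⟩)
            · have hjT : j ∈ Finset.Icc (m + 2) (m + i) := Finset.mem_Icc.mpr ⟨hjs, hj.2⟩
              have h1 : X j ω ≠ v := hnp j hjT
              have h2 : X j ω ≠ -v := fun hc => (hnm j hjT k hk hjk hc) hXk
              rcases hval j ω with h | h | h
              · rw [patB_other v (by omega) (by omega)]; exact h
              · exact absurd h h1
              · exact absurd h h2
        · apply Set.mem_union_left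
          push_neg at hex
          rw [hC0def, memCyl]
          intro j hj
          rw [Finset.mem_Icc] at hj
          rcases Nat.lt_or_ge j (m + 2) with hjs | hjs
          · exact hω j (Finset.mem_Icc.mpr ⟨hj.1, by omega⟩)
          · have hjT : j ∈ Finset.Icc (m + 2) (m + i) := Finset.mem_Icc.mpr ⟨hjs, hj.2⟩
            have h1 : X j ω ≠ v := hnp j hjT
            have h2 : X j ω ≠ -v := hex j hjT
            rcases hval j ω with h | h | h
            · rw [patB_other v (by omega) (by omega)]; exact h
            · exact absurd h h1
            · exact absurd h h2
    have hBeq : B = E i ∪ (C0 ∪ ⋃ k ∈ Finset.Icc (m + 2) (m + i), CK k) :=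
      Set.Subset.antisymm hcover
        (Set.union_subset hEB (Set.union_subset hC0B (Set.iUnion₂_subset hCKB)))
    have hmC0 : MeasurableSet C0 := by
      rw [hC0def]; exact cylEq_meas X hmeas _ _
    have hmCK : ∀ k, MeasurableSet (CK k) := by
      intro k
      simp only [hCKdef]
      exact cylEq_meas X hmeas _ _
    have hdisj1 : Disjoint (E i) (C0 ∪ ⋃ k ∈ Finset.Icc (m + 2) (m + i), CK k) := by
      rw [Set.disjoint_left]
      intro ω hE hU
      rcases hU with hU | hU
      · exact hdisC0 ω hE hU
      · rw [Set.mem_iUnion₂] at hU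
        obtain ⟨k, hk, hUk⟩ := hU
        exact hdisCK k hk ω hE hUk
    have hdisj2 : Disjoint C0 (⋃ k ∈ Finset.Icc (m + 2) (m + i), CK k) := by
      rw [Set.disjoint_left]
      intro ω hC0m hU
      rw [Set.mem_iUnion₂] at hU
      obtain ⟨k, hk, hUk⟩ := hU
      rw [Finset.mem_Icc] at hk
      rw [hC0def, memCyl] at hC0m
      simp only [hCKdef] at hUk
      rw [memCyl] at hUk
      have h1 := hC0m k (Finset.mem_Icc.mpr ⟨by omega, by omega⟩)
      have h2 := hUk k (Finset.mem_Icc.mpr ⟨by omega, by omega⟩)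
      rw [patK_self] at h2
      rw [patB_other v (by omega) (by omega)] at h1
      rw [h1] at h2
      rcases hv with rfl | rfl <;> exact absurd h2 (by decide)
    have hpd : (↑(Finset.Icc (m + 2) (m + i)) : Set ℕ).PairwiseDisjoint CK := by
      intro x hx y hy hxy
      rw [Finset.mem_coe, Finset.mem_Icc] at hx hy
      rw [Function.onFun, Set.disjoint_left]
      intro ω h1 h2
      simp only [hCKdef] at h1 h2
      rw [memCyl] at h1 h2
      have e1 := h1 x (Finset.mem_Icc.mpr ⟨by omega, by omega⟩)
      have e2 := h2 x (Finset.mem_Icc.mpr ⟨by omega, by omega⟩)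
      rw [patK_self] at e1
      rw [patK_other v hxy, patB_other v (by omega) (by omega)] at e2
      rw [e2] at e1
      rcases hv with rfl | rfl <;> exact absurd e1 (by decide)
    have hPB : P B = P (E i) + (P C0 + ∑ k ∈ Finset.Icc (m + 2) (m + i), P (CK k)) := by
      rw [hBeq, measure_union hdisj1 (hmC0.union (MeasurableSet.biUnion
          (Finset.Icc (m + 2) (m + i)).countable_toSet (fun k _ => hmCK k))),
        measure_union hdisj2 (MeasurableSet.biUnion
          (Finset.Icc (m + 2) (m + i)).countable_toSet (fun k _ => hmCK k)),
        measure_biUnion_finset hpd (fun k _ => hmCK k)]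
    have htR : (P B).toReal = (P (E i)).toReal +
        ((P C0).toReal + ∑ k ∈ Finset.Icc (m + 2) (m + i), (P (CK k)).toReal) := by
      rw [hPB, ENNReal.toReal_add (measure_ne_top P _)
        (ENNReal.add_ne_top.mpr ⟨measure_ne_top P _,
          (ENNReal.sum_lt_top.mpr (fun k _ => measure_lt_top P _)).ne⟩),
        ENNReal.toReal_add (measure_ne_top P _)
          (ENNReal.sum_lt_top.mpr (fun k _ => measure_lt_top P _)).ne,
        ENNReal.toReal_sum (fun k _ => measure_ne_top P _)]
    have hPBv : (P B).toReal = a ^ 2 * p ^ (m - 1) := by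
      rw [hBdef, prob_patB P X hindep p a hp ha v h0 hA i m (m + 1) (by omega) (by omega) le_rfl,
        show m + 1 - 2 = m - 1 by omega]
    have hPC0v : (P C0).toReal = a ^ 2 * p ^ (m + i - 2) := by
      rw [hC0def, prob_patB P X hindep p a hp ha v h0 hA i m (m + i) (by omega) (by omega)
        (by omega)]
    have hPCKv : ∀ k ∈ Finset.Icc (m + 2) (m + i), (P (CK k)).toReal =
        a ^ 2 * b * p ^ (m + i - 3) := by
      intro k hk
      rw [Finset.mem_Icc] at hk
      simp only [hCKdef]
      exact prob_patK P X hindep p a b hp ha hb v h0 hA hB i m (m + i) k (by omega) (by omega)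
        (by omega) (by omega)
    rw [hPBv, hPC0v, Finset.sum_congr rfl hPCKv, Finset.sum_const, Nat.card_Icc,
      nsmul_eq_mul] at htR
    rw [show m + i + 1 - (m + 2) = i - 1 by omega, Nat.cast_sub (by omega : 1 ≤ i),
      Nat.cast_one] at htR
    have e1 : p ^ (m + i - 2) = p ^ (m - 1) * p ^ (i - 1) := by
      rw [← pow_add]; congr 1; omega
    have e2 : p ^ (m + i - 3) = p ^ (m - 1) * p ^ (i - 2) := by
      rw [← pow_add]; congr 1; omega
    rw [e1, e2] at htR
    linear_combination -htR
  -- assemble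
  have hsetsplit : Finset.Icc 1 m = insert 1 (insert m (Finset.Icc 2 (m - 1))) := by
    ext x
    simp only [Finset.mem_Icc, Finset.mem_insert]
    omega
  rw [hsetsplit, Finset.sum_insert (by simp only [Finset.mem_insert, Finset.mem_Icc]; omega),
    Finset.sum_insert (by rw [Finset.mem_Icc]; omega)]
  rw [hE1, hEm]
  rw [Finset.sum_congr rfl (fun i hi => hmid i (Finset.mem_Icc.mp hi).1
    (by have := (Finset.mem_Icc.mp hi).2; omega))]
  have hsum2 : ∑ i ∈ Finset.Icc 2 (m - 1),
      a ^ 2 * p ^ (m - 1) * (1 - p ^ (i - 1) - ((i : ℝ) - 1) * p ^ (i - 2) * b)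
      = (↑(Finset.Icc 2 (m - 1)).card) * (a ^ 2 * p ^ (m - 1)) -
        a ^ 2 * p ^ (m - 1) *
          ∑ i ∈ Finset.Icc 2 (m - 1), (p ^ (i - 1) + ((i : ℝ) - 1) * p ^ (i - 2) * b) := by
    calc ∑ i ∈ Finset.Icc 2 (m - 1),
        a ^ 2 * p ^ (m - 1) * (1 - p ^ (i - 1) - ((i : ℝ) - 1) * p ^ (i - 2) * b)
        = ∑ i ∈ Finset.Icc 2 (m - 1), (a ^ 2 * p ^ (m - 1) -
            a ^ 2 * p ^ (m - 1) * (p ^ (i - 1) + ((i : ℝ) - 1) * p ^ (i - 2) * b)) :=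
          Finset.sum_congr rfl (fun i _ => by ring)
      _ = _ := by
          rw [Finset.sum_sub_distrib, Finset.sum_const, nsmul_eq_mul, ← Finset.mul_sum]
  rw [hsum2, Nat.card_Icc, show m - 1 + 1 - 2 = m - 2 by omega,
    Nat.cast_sub (by omega : 2 ≤ m)]
  push_cast
  ring


private lemma F1 (p : ℝ) (k : ℕ) :
    (p - 1) * ∑ i ∈ Finset.Icc 2 (k + 2), p ^ (i - 1) = p ^ (k + 2) - p := by
  induction k with
  | zero => simp; ring
  | succ n ih =>
    rw [show n + 1 + 2 = (n + 2) + 1 by omega,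
      Finset.sum_Icc_succ_top (by omega)]
    rw [mul_add, ih]
    rw [show (n + 2 + 1) - 1 = n + 2 by omega]
    ring

private lemma F2 (p : ℝ) (k : ℕ) :
    (p - 1) ^ 2 * ∑ i ∈ Finset.Icc 2 (k + 2), ((i : ℝ) - 1) * p ^ (i - 2) =
      ((k : ℝ) + 1) * p ^ (k + 2) - ((k : ℝ) + 2) * p ^ (k + 1) + 1 := by
  induction k with
  | zero => norm_num; ring
  | succ n ih =>
    rw [show n + 1 + 2 = (n + 2) + 1 by omega,
      Finset.sum_Icc_succ_top (by omega)]
    rw [mul_add, ih]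
    rw [show (n + 2 + 1) - 2 = n + 1 by omega]
    push_cast
    ring

private lemma algAux (p q1 q2 : ℝ) (hp : p ≠ 1) (hq : q1 + q2 = 1 - p) (m : ℕ) (hm : 3 ≤ m) :
    p ^ (m - 1) * q1 ^ 2 * (((m : ℝ) - 1) -
        ∑ i ∈ Finset.Icc 2 (m - 1), (p ^ (i - 1) + ((i : ℝ) - 1) * p ^ (i - 2) * q2)) +
      p ^ (m - 1) * q2 ^ 2 * (((m : ℝ) - 1) -
        ∑ i ∈ Finset.Icc 2 (m - 1), (p ^ (i - 1) + ((i : ℝ) - 1) * p ^ (i - 2) * q1)) =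
    p ^ (m - 1) *
      ((q1 ^ 2 + q2 ^ 2) * (((m : ℝ) - 1) + p / (p - 1)) + q1 * q2 / (p - 1) -
        (q1 ^ 2 + q2 ^ 2) * p ^ (m - 1) / (p - 1) +
        q1 * q2 * (((m : ℝ) - 2) * p ^ (m - 2) - p ^ (m - 2) / (p - 1))) := by
  obtain ⟨k, rfl⟩ : ∃ k, m = k + 3 := ⟨m - 3, by omega⟩
  have hp' : p - 1 ≠ 0 := sub_ne_zero.mpr hp
  have e1 := F1 p k
  have e2 := F2 p k
  have hq2 : q2 = 1 - p - q1 := by linarith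
  subst hq2
  rw [show k + 3 - 1 = k + 2 by omega, show k + 3 - 2 = k + 1 by omega] at *
  simp only [Finset.sum_add_distrib]
  rw [show (∑ i ∈ Finset.Icc 2 (k + 2), ((i : ℝ) - 1) * p ^ (i - 2) * (1 - p - q1)) =
      (∑ i ∈ Finset.Icc 2 (k + 2), ((i : ℝ) - 1) * p ^ (i - 2)) * (1 - p - q1) from
    (Finset.sum_mul ..).symm]
  rw [show (∑ i ∈ Finset.Icc 2 (k + 2), ((i : ℝ) - 1) * p ^ (i - 2) * q1) =
      (∑ i ∈ Finset.Icc 2 (k + 2), ((i : ℝ) - 1) * p ^ (i - 2)) * q1 from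
    (Finset.sum_mul ..).symm]
  set S1 := ∑ i ∈ Finset.Icc 2 (k + 2), p ^ (i - 1) with hS1
  set S2 := ∑ i ∈ Finset.Icc 2 (k + 2), ((i : ℝ) - 1) * p ^ (i - 2) with hS2
  have h1 : S1 = (p ^ (k + 2) - p) / (p - 1) := by
    rw [eq_div_iff hp']; linarith
  have h2 : S2 = (((k : ℝ) + 1) * p ^ (k + 2) - ((k : ℝ) + 2) * p ^ (k + 1) + 1) / ((p - 1) ^ 2) := by
    rw [eq_div_iff (pow_ne_zero 2 hp')]; linarith
  rw [h1, h2]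
  push_cast
  field_simp
  ring

theorem sum_Y_plus_minus
    {Ω : Type*} [MeasurableSpace Ω] (P : Measure Ω) [IsProbabilityMeasure P]
    (X : ℕ → Ω → ℤ) (hmeas : ∀ i, Measurable (X i))
    (hindep : iIndepFun X P)
    (p q1 q2 : ℝ) (hp : 0 < p) (hq1 : 0 < q1) (hq2 : 0 < q2) (hsum : p + q1 + q2 = 1)
    (h0 : ∀ i, P {ω | X i ω = 0} = ENNReal.ofReal p)
    (h1 : ∀ i, P {ω | X i ω = 1} = ENNReal.ofReal q1)
    (h2 : ∀ i, P {ω | X i ω = -1} = ENNReal.ofReal q2)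
    (hval : ∀ i ω, X i ω = 0 ∨ X i ω = 1 ∨ X i ω = -1)
    (hp1 : p < 1) (m : ℕ) (hm : 3 ≤ m) :
    (∑ i ∈ Finset.Icc 1 m, (P (plusEvent X m i ∩ ⋂ n ∈ Finset.Icc 2 m, (contaminatedEvent X m n)ᶜ)).toReal) +
      (∑ i ∈ Finset.Icc 1 m, (P (minusEvent X m i ∩ ⋂ n ∈ Finset.Icc 2 m, (contaminatedEvent X m n)ᶜ)).toReal) =
    p ^ (m - 1) *
      ((q1 ^ 2 + q2 ^ 2) * (((m : ℝ) - 1) + p / (p - 1)) + q1 * q2 / (p - 1) -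
        (q1 ^ 2 + q2 ^ 2) * p ^ (m - 1) / (p - 1) +
        q1 * q2 * (((m : ℝ) - 2) * p ^ (m - 2) - p ^ (m - 2) / (p - 1))) := by
  have hq12 : q1 + q2 = 1 - p := by linarith
  have hvalNeg : ∀ i ω, X i ω = 0 ∨ X i ω = -1 ∨ X i ω = -(-1 : ℤ) := by
    intro i ω
    rcases hval i ω with h | h | h
    · exact Or.inl h
    · refine Or.inr (Or.inr ?_)
      rw [h]; decide
    · exact Or.inr (Or.inl h)
  have h1' : ∀ i, P {ω | X i ω = -(-1 : ℤ)} = ENNReal.ofReal q1 := by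
    intro i
    have hs : ({ω | X i ω = -(-1 : ℤ)} : Set Ω) = {ω | X i ω = 1} := by norm_num
    rw [hs]; exact h1 i
  have hplus := signSumAux P X hmeas hindep p q1 q2 hp.le hq1.le hq2.le 1 (Or.inl rfl)
    h0 h1 h2 hval m hm
  have hminus := signSumAux P X hmeas hindep p q2 q1 hp.le hq2.le hq1.le (-1) (Or.inr rfl)
    h0 h2 h1' hvalNeg m hm
  simp only [plusEvent, minusEvent]
  rw [hplus, hminus]
  exact algAux p q1 q2 hp1.ne hq12 m hm
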